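/- Let Δ be a pure d-dimensional simplicial complex (d ≥ 1) on vertex set [n] = {1,...,n}, identified with its set of facets. Let N be the number of pairs (σ,k) with Φ_{σ,k} ≠ ∅ and let s be the number of effective peaks of Δ. Then in ℤ[t]: t^{ns−N} · ∑_S t^{N−|S|} = ∏_{effective peaks σ} (∑_{m≥0} isf_m(G_σ) t^{n−m}), where the sum over S runs over all cage-free subsets of the facets of Δ. In particular, the total number of cage-free facet subsets of Δ equals ∏_{effective peaks σ} isf(G_σ). -/

import Mathlib

open Polynomial Classical

/-- A simple graph on a linearly ordered vertex type is an *increasing forest*. -/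
def IsIncreasingForest {V : Type*} [LinearOrder V] (F : SimpleGraph V) : Prop :=
  F.IsAcyclic ∧ ∀ (r v : V), (∀ w, F.Reachable r w → r ≤ w) →
    ∀ p : F.Walk r v, p.IsPath → p.support.Chain' (· < ·)

/-- `F` is an increasing spanning forest of `G`. -/
def IsISF {n : ℕ} (G : SimpleGraph (Fin n)) (F : Finset (Sym2 (Fin n))) : Prop :=
  (F : Set (Sym2 (Fin n))) ⊆ G.edgeSet ∧
    IsIncreasingForest (SimpleGraph.fromEdgeSet (F : Set (Sym2 (Fin n))))

/-- The number of increasing spanning forests of `G` with `m` edges. -/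
noncomputable def isf {n : ℕ} (G : SimpleGraph (Fin n)) (m : ℕ) : ℕ :=
  ((Finset.univ : Finset (Finset (Sym2 (Fin n)))).filter
    (fun F => IsISF G F ∧ F.card = m)).card

/-- The total number of increasing spanning forests of `G`. -/
noncomputable def isfTotal {n : ℕ} (G : SimpleGraph (Fin n)) : ℕ :=
  ((Finset.univ : Finset (Finset (Sym2 (Fin n)))).filter (fun F => IsISF G F)).card

/-- `Phi Δ σ k`: the facets of `Δ` of the form `[σ, j, k]_<` with `σ < j < k`. -/
noncomputable def Phi {n : ℕ} (Δ : Finset (Finset (Fin n))) (σ : Finset (Fin n)) (k : Fin n) :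
    Finset (Finset (Fin n)) :=
  Δ.filter (fun φ => ∃ j : Fin n, (∀ x ∈ σ, x < j) ∧ j < k ∧ φ = insert j (insert k σ))

/-- The number of pairs `(σ, k)` with `Phi Δ σ k ≠ ∅`. -/
noncomputable def Npairs {n : ℕ} (Δ : Finset (Finset (Fin n))) : ℕ :=
  ((Finset.univ : Finset (Finset (Fin n) × Fin n)).filter
    (fun p => (Phi Δ p.1 p.2).Nonempty)).card

/-- A subset of the facets of `Δ` is cage-free if it meets each `Phi Δ σ k` in at
most one facet. -/
def IsCageFree {n : ℕ} (Δ : Finset (Finset (Fin n))) (S : Finset (Finset (Fin n))) : Prop :=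
  ∀ (σ : Finset (Fin n)) (k : Fin n), (S ∩ Phi Δ σ k).card ≤ 1

/-- The set of cage-free facet subsets of `Δ`. -/
noncomputable def cageFreeSubsets {n : ℕ} (Δ : Finset (Finset (Fin n))) :
    Finset (Finset (Finset (Fin n))) :=
  Δ.powerset.filter (fun S => IsCageFree Δ S)

/-- The *upper link* of a peak `σ`: the graph on `[n]` with an edge `ij` whenever
`max σ < i`, `max σ < j` and `σ ∪ {i, j}` is a facet of `Δ`. -/
def upperLink {n : ℕ} (Δ : Finset (Finset (Fin n))) (σ : Finset (Fin n)) :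
    SimpleGraph (Fin n) :=
  SimpleGraph.fromRel
    (fun i j => (∀ x ∈ σ, x < i) ∧ (∀ x ∈ σ, x < j) ∧ insert i (insert j σ) ∈ Δ)

/-- The effective peaks of `Δ`: `(d-1)`-element faces whose upper link has an edge. -/
noncomputable def effectivePeaks {n : ℕ} (d : ℕ) (Δ : Finset (Finset (Fin n))) :
    Finset (Finset (Fin n)) :=
  (Finset.univ : Finset (Finset (Fin n))).filter
    (fun σ => σ.card = d - 1 ∧ (∃ φ ∈ Δ, σ ⊆ φ) ∧ ∃ i j, (upperLink Δ σ).Adj i j)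

section LemmaA

variable {V : Type*} [Fintype V] [LinearOrder V]

/-- each vertex has at most one smaller neighbor -/
def GoodF (F : Set (Sym2 V)) : Prop :=
  ∀ k j1 j2 : V, j1 < k → j2 < k → s(j1, k) ∈ F → s(j2, k) ∈ F → j1 = j2

lemma support_le_of_chain {G : SimpleGraph V} {a v : V} (p : G.Walk a v)
    (hc : p.support.Chain' (· < ·)) : ∀ x ∈ p.support, x ≤ v := by
  induction p with
  | nil => intro x hx; rw [SimpleGraph.Walk.support_nil] at hx; simp at hx; simp [hx]
  | @cons a b v h q ih =>
    intro x hx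
    rw [SimpleGraph.Walk.support_cons] at hx hc
    rcases List.mem_cons.1 hx with rfl | hx'
    · have h1 : x < b := by
        rw [q.support_eq_cons] at hc
        exact (List.isChain_cons_cons.1 hc).1
      exact h1.le.trans (ih hc.tail b q.start_mem_support)
    · exact ih hc.tail x hx'

lemma chain_aux {F : Set (Sym2 V)} (hF : GoodF F) {a v : V}
    (p : (SimpleGraph.fromEdgeSet F).Walk a v) (hp : p.IsPath)
    (ha : ∀ c, c < a → s(c, a) ∈ F → c ∉ p.support) : p.support.Chain' (· < ·) := by
  induction p with
  | nil => simp [List.Chain']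
  | @cons a b v h q ih =>
    have hab : s(a, b) ∈ F := ((SimpleGraph.fromEdgeSet_adj F).1 h).1
    have hlt : a < b := by
      rcases h.ne.lt_or_gt with h' | h'
      · exact h'
      · exact absurd (q.start_mem_support) (by
          have := ha b h' (Sym2.eq_swap ▸ hab)
          rw [SimpleGraph.Walk.support_cons] at this
          intro hb; exact this (List.mem_cons_of_mem _ hb))
    have hp' : q.IsPath := hp.of_cons
    have hna : a ∉ q.support := ((SimpleGraph.Walk.cons_isPath_iff _ _).1 hp).2
    have hq : q.support.Chain' (· < ·) := by
      refine ih hp' ?_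
      intro c hc hcb hmem
      have : c = a := hF b c a hc hlt hcb hab
      exact hna (this ▸ hmem)
    rw [SimpleGraph.Walk.support_cons, q.support_eq_cons, List.Chain', List.isChain_cons_cons]
    refine ⟨hlt, ?_⟩
    rw [← q.support_eq_cons]; exact hq

end LemmaA

section LemmaA2
variable {V : Type*} [Fintype V] [LinearOrder V]

lemma cycle_aux {F : Set (Sym2 V)} (hF : GoodF F) {M : V}
    (q : (SimpleGraph.fromEdgeSet F).Walk M M) (hq : q.IsCycle)
    (hM : ∀ x ∈ q.support, x ≤ M) : False := by
  cases q with
  | nil => exact hq.ne_nil rfl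
  | @cons _ b _ h t =>
    have hb : b < M := lt_of_le_of_ne
      (hM b (by rw [SimpleGraph.Walk.support_cons]; exact List.mem_cons_of_mem _ t.start_mem_support)) h.ne'
    cases htr : t.reverse with
    | nil =>
      exact absurd hb (lt_irrefl M)
    | @cons _ c _ h' t2 =>
      have hcmem : c ∈ t.support := by
        have : c ∈ t.reverse.support := by
          rw [htr, SimpleGraph.Walk.support_cons]; exact List.mem_cons_of_mem _ t2.start_mem_support
        rwa [SimpleGraph.Walk.support_reverse, List.mem_reverse] at this
      have hc : c < M := lt_of_le_of_ne
        (hM c (by rw [SimpleGraph.Walk.support_cons]; exact List.mem_cons_of_mem _ hcmem)) h'.ne'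
      have hMc : s(M, c) ∈ t.edges := by
        have : s(M, c) ∈ t.reverse.edges := by
          rw [htr, SimpleGraph.Walk.edges_cons]; exact List.mem_cons_self
        rwa [SimpleGraph.Walk.edges_reverse, List.mem_reverse] at this
      have hbc : b ≠ c := by
        rintro rfl
        have hnodup := hq.edges_nodup
        rw [SimpleGraph.Walk.edges_cons] at hnodup
        exact (List.nodup_cons.1 hnodup).1 hMc
      have e1 : s(b, M) ∈ F := by
        have := ((SimpleGraph.fromEdgeSet_adj F).1 h).1; rwa [Sym2.eq_swap] at this
      have e2 : s(c, M) ∈ F := by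
        have := ((SimpleGraph.fromEdgeSet_adj F).1 h').1; rwa [Sym2.eq_swap] at this
      exact hbc (hF M b c hb hc e1 e2)

lemma isIncreasingForest_iff_good {F : Set (Sym2 V)} :
    IsIncreasingForest (SimpleGraph.fromEdgeSet F) ↔ GoodF F := by
  constructor
  · rintro ⟨hac, hinc⟩ k j1 j2 h1 h2 e1 e2
    classical
    set G := SimpleGraph.fromEdgeSet F with hG
    have adj1 : G.Adj j1 k := (SimpleGraph.fromEdgeSet_adj F).2 ⟨e1, h1.ne⟩
    have adj2 : G.Adj j2 k := (SimpleGraph.fromEdgeSet_adj F).2 ⟨e2, h2.ne⟩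
    set C : Finset V := Finset.univ.filter (fun w => G.Reachable k w) with hC
    have hkC : k ∈ C := Finset.mem_filter.2 ⟨Finset.mem_univ _, SimpleGraph.Reachable.refl k⟩
    set r := C.min' ⟨k, hkC⟩ with hr
    have hrC : G.Reachable k r := (Finset.mem_filter.1 (C.min'_mem _)).2
    have hrmin : ∀ w, G.Reachable r w → r ≤ w := fun w hw =>
      C.min'_le w (Finset.mem_filter.2 ⟨Finset.mem_univ _, hrC.trans hw⟩)
    obtain ⟨w1⟩ := hrC.symm.trans adj1.symm.reachable
    obtain ⟨w2⟩ := hrC.symm.trans adj2.symm.reachable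
    set p1 := w1.toPath with hp1
    set p2 := w2.toPath with hp2
    have hle1 := support_le_of_chain (p1 : G.Walk r j1) (hinc r j1 hrmin p1.1 p1.2)
    have hle2 := support_le_of_chain (p2 : G.Walk r j2) (hinc r j2 hrmin p2.1 p2.2)
    have hk1 : k ∉ (p1 : G.Walk r j1).reverse.support := by
      rw [SimpleGraph.Walk.support_reverse, List.mem_reverse]
      exact fun hk => absurd (hle1 k hk) (not_le.2 h1)
    have hk2 : k ∉ (p2 : G.Walk r j2).reverse.support := by
      rw [SimpleGraph.Walk.support_reverse, List.mem_reverse]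
      exact fun hk => absurd (hle2 k hk) (not_le.2 h2)
    have hq1 : (SimpleGraph.Walk.cons adj1.symm (p1 : G.Walk r j1).reverse).IsPath :=
      p1.2.reverse.cons hk1
    have hq2 : (SimpleGraph.Walk.cons adj2.symm (p2 : G.Walk r j2).reverse).IsPath :=
      p2.2.reverse.cons hk2
    have hpq := SimpleGraph.isAcyclic_iff_path_unique.1 hac
      (⟨_, hq1⟩ : G.Path k r) (⟨_, hq2⟩ : G.Path k r)
    have hsup : (p1 : G.Walk r j1).support = (p2 : G.Walk r j2).support := by
      have h0 := congrArg (fun q : G.Path k r => (q : G.Walk k r).support) hpq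
      simp only [SimpleGraph.Walk.support_cons, SimpleGraph.Walk.support_reverse] at h0
      have := List.cons.injEq _ _ _ _ ▸ h0
      exact List.reverse_injective (by simpa using h0)
    have m1 : j1 ∈ (p2 : G.Walk r j2).support := hsup ▸ (p1 : G.Walk r j1).end_mem_support
    have m2 : j2 ∈ (p1 : G.Walk r j1).support := hsup ▸ (p2 : G.Walk r j2).end_mem_support
    exact le_antisymm (hle2 j1 m1) (hle1 j2 m2)
  · intro hF
    constructor
    · intro v c hc
      classical
      have hne : c.support.toFinset.Nonempty := ⟨v, by simp⟩
      set M := c.support.toFinset.max' hne with hM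
      have hMmem : M ∈ c.support := List.mem_toFinset.1 (c.support.toFinset.max'_mem hne)
      have hmax : ∀ x ∈ c.support, x ≤ M := fun x hx => Finset.le_max' _ x (List.mem_toFinset.2 hx)
      refine cycle_aux hF (c.rotate M hMmem) (hc.rotate hMmem) ?_
      intro x hx
      rw [(c.rotate M hMmem).support_eq_cons] at hx
      rcases List.mem_cons.1 hx with rfl | hx'
      · exact le_refl _
      · exact hmax x (List.mem_of_mem_tail
          ((SimpleGraph.Walk.support_rotate c M hMmem).mem_iff.1 hx'))
    · intro r v hr p hp
      refine chain_aux hF p hp ?_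
      intro c hc hcr _
      have hadj : (SimpleGraph.fromEdgeSet F).Adj r c :=
        (SimpleGraph.fromEdgeSet_adj F).2 ⟨Sym2.eq_swap ▸ hcr, hc.ne'⟩
      exact absurd (hr c hadj.reachable) (not_le.2 hc)

end LemmaA2


noncomputable def kF {n : ℕ} (φ : Finset (Fin (n+1))) : Fin (n+1) := WithBot.unbotD 0 φ.max
noncomputable def jF {n : ℕ} (φ : Finset (Fin (n+1))) : Fin (n+1) := WithBot.unbotD 0 (φ.erase (kF φ)).max
noncomputable def botF {n : ℕ} (φ : Finset (Fin (n+1))) : Finset (Fin (n+1)) :=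
  (φ.erase (kF φ)).erase (jF φ)

lemma unbot'_max {n : ℕ} (s : Finset (Fin (n+1))) (h : s.Nonempty) :
    WithBot.unbotD 0 s.max = s.max' h := by
  rw [← Finset.coe_max' h]; rfl

lemma sym2_eq {α : Type*} [LinearOrder α] {j1 k1 j2 k2 : α} (h1 : j1 < k1) (h2 : j2 < k2)
    (he : s(j1, k1) = s(j2, k2)) : j1 = j2 ∧ k1 = k2 := by
  rcases Sym2.eq_iff.1 he with ⟨rfl, rfl⟩ | ⟨rfl, rfl⟩
  · exact ⟨rfl, rfl⟩
  · exact absurd (h1.trans h2) (lt_irrefl _)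

lemma decomp_eq {n : ℕ} {φ σ : Finset (Fin (n+1))} {j k : Fin (n+1)}
    (hσj : ∀ x ∈ σ, x < j) (hjk : j < k) (hφ : φ = insert j (insert k σ)) :
    kF φ = k ∧ jF φ = j ∧ botF φ = σ ∧ φ.card = σ.card + 2 := by
  have hjσ : j ∉ σ := fun h => lt_irrefl j (hσj j h)
  have hkσ : k ∉ σ := fun h => absurd hjk (not_lt.2 (hσj k h).le)
  have hkmem : k ∈ φ := by rw [hφ]; simp
  have hk : kF φ = k := by
    rw [kF, unbot'_max φ ⟨k, hkmem⟩]
    refine le_antisymm (Finset.max'_le _ _ _ ?_) (Finset.le_max' _ _ hkmem)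
    intro x hx; rw [hφ] at hx; simp only [Finset.mem_insert] at hx
    rcases hx with rfl | rfl | hx
    · exact hjk.le
    · exact le_refl _
    · exact ((hσj x hx).trans hjk).le
  have herase : φ.erase k = insert j σ := by
    rw [hφ, Finset.insert_comm]
    exact Finset.erase_insert (by simp [hkσ, hjk.ne'])
  have hjmem : j ∈ φ.erase k := by rw [herase]; simp
  have hj : jF φ = j := by
    rw [jF, hk, unbot'_max _ ⟨j, hjmem⟩]
    refine le_antisymm (Finset.max'_le _ _ _ ?_) (Finset.le_max' _ _ hjmem)
    intro x hx; rw [herase] at hx; simp only [Finset.mem_insert] at hx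
    rcases hx with rfl | hx
    · exact le_refl _
    · exact (hσj x hx).le
  have hbot : botF φ = σ := by rw [botF, hk, hj, herase, Finset.erase_insert hjσ]
  refine ⟨hk, hj, hbot, ?_⟩
  rw [hφ, Finset.card_insert_of_notMem (by simp [hjσ, hjk.ne]),
    Finset.card_insert_of_notMem hkσ]

lemma decomp_exists {n : ℕ} {φ : Finset (Fin (n+1))} (h2 : 2 ≤ φ.card) :
    (∀ x ∈ botF φ, x < jF φ) ∧ jF φ < kF φ ∧
      φ = insert (jF φ) (insert (kF φ) (botF φ)) := by
  have hne : φ.Nonempty := Finset.card_pos.1 (by omega)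
  have hkm : kF φ = φ.max' hne := unbot'_max φ hne
  have hkmem : kF φ ∈ φ := by rw [hkm]; exact φ.max'_mem hne
  have hemax : ∀ x ∈ φ, x ≤ kF φ := by
    intro x hx; rw [hkm]; exact Finset.le_max' _ x hx
  have hene : (φ.erase (kF φ)).Nonempty := by
    rw [← Finset.card_pos, Finset.card_erase_of_mem hkmem]; omega
  have hjm : jF φ = (φ.erase (kF φ)).max' hene := unbot'_max _ hene
  have hjmem' : jF φ ∈ φ.erase (kF φ) := by rw [hjm]; exact Finset.max'_mem _ hene
  have hjk : jF φ < kF φ := lt_of_le_of_ne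
    (hemax _ (Finset.mem_of_mem_erase hjmem')) (Finset.ne_of_mem_erase hjmem')
  refine ⟨?_, hjk, ?_⟩
  · intro x hx
    have hx' : x ∈ φ.erase (kF φ) := Finset.mem_of_mem_erase hx
    refine lt_of_le_of_ne ?_ (Finset.ne_of_mem_erase hx)
    rw [hjm]; exact Finset.le_max' _ x hx'
  · rw [Finset.insert_comm, botF, Finset.insert_erase hjmem', Finset.insert_erase hkmem]


section Main
variable {n d : ℕ} {Δ : Finset (Finset (Fin (n+1)))}

lemma facet_two_le (hd : 1 ≤ d) (hpure : ∀ φ ∈ Δ, φ.card = d + 1) {φ} (hφ : φ ∈ Δ) :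
    2 ≤ φ.card := by rw [hpure φ hφ]; omega

lemma upperLink_adj_of {σ : Finset (Fin (n+1))} {i j : Fin (n+1)}
    (hi : ∀ x ∈ σ, x < i) (hj : ∀ x ∈ σ, x < j) (hij : i ≠ j)
    (hins : insert i (insert j σ) ∈ Δ) : (upperLink Δ σ).Adj i j := by
  rw [upperLink, SimpleGraph.fromRel_adj]
  exact ⟨hij, Or.inl ⟨hi, hj, hins⟩⟩

lemma botF_mem_peaks (hd : 1 ≤ d) (hpure : ∀ φ ∈ Δ, φ.card = d + 1) {φ} (hφ : φ ∈ Δ) :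
    botF φ ∈ effectivePeaks d Δ := by
  obtain ⟨hlt, hjk, heq⟩ := decomp_exists (facet_two_le hd hpure hφ)
  have hcard := (decomp_eq hlt hjk heq).2.2.2
  refine Finset.mem_filter.2 ⟨Finset.mem_univ _, ?_, ⟨φ, hφ, ?_⟩, jF φ, kF φ, ?_⟩
  · have := hpure φ hφ; omega
  · exact (Finset.erase_subset _ _).trans (Finset.erase_subset _ _)
  · exact upperLink_adj_of hlt (fun x hx => (hlt x hx).trans hjk) hjk.ne (heq ▸ hφ)

lemma mem_Phi_iff (hd : 1 ≤ d) (hpure : ∀ φ ∈ Δ, φ.card = d + 1)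
    {φ σ : Finset (Fin (n+1))} {k : Fin (n+1)} :
    φ ∈ Phi Δ σ k ↔ φ ∈ Δ ∧ botF φ = σ ∧ kF φ = k := by
  constructor
  · intro hmem
    rw [Phi, Finset.mem_filter] at hmem
    obtain ⟨hφΔ, j, hσj, hjk, hφ⟩ := hmem
    obtain ⟨hk, hj, hb, -⟩ := decomp_eq hσj hjk hφ
    exact ⟨hφΔ, hb, hk⟩
  · rintro ⟨hφΔ, rfl, rfl⟩
    obtain ⟨hlt, hjk, hφ⟩ := decomp_exists (facet_two_le hd hpure hφΔ)
    exact Finset.mem_filter.2 ⟨hφΔ, jF φ, hlt, hjk, hφ⟩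

lemma facet_inj (hd : 1 ≤ d) (hpure : ∀ φ ∈ Δ, φ.card = d + 1) {φ1 φ2}
    (h1 : φ1 ∈ Δ) (h2 : φ2 ∈ Δ) (hb : botF φ1 = botF φ2)
    (he : s(jF φ1, kF φ1) = s(jF φ2, kF φ2)) : φ1 = φ2 := by
  obtain ⟨-, hjk1, heq1⟩ := decomp_exists (facet_two_le hd hpure h1)
  obtain ⟨-, hjk2, heq2⟩ := decomp_exists (facet_two_le hd hpure h2)
  obtain ⟨hj, hk⟩ := sym2_eq hjk1 hjk2 he
  rw [heq1, heq2, hj, hk, hb]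

noncomputable def theta {n : ℕ} (S : Finset (Finset (Fin (n+1)))) (σ : Finset (Fin (n+1))) :
    Finset (Sym2 (Fin (n+1))) :=
  (S.filter (fun φ => botF φ = σ)).image (fun φ => s(jF φ, kF φ))

noncomputable def ISFset {n : ℕ} (G : SimpleGraph (Fin n)) : Finset (Finset (Sym2 (Fin n))) :=
  Finset.univ.filter (fun F => IsISF G F)

noncomputable def psi {n : ℕ} (d : ℕ) (Δ : Finset (Finset (Fin (n+1))))
    (p : (σ : Finset (Fin (n+1))) → σ ∈ effectivePeaks d Δ → Finset (Sym2 (Fin (n+1)))) :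
    Finset (Finset (Fin (n+1))) :=
  Δ.filter (fun φ => ∃ h : botF φ ∈ effectivePeaks d Δ, s(jF φ, kF φ) ∈ p (botF φ) h)

lemma mem_theta {S σ : Finset _} {e : Sym2 (Fin (n+1))} :
    e ∈ theta S σ ↔ ∃ φ ∈ S, botF φ = σ ∧ s(jF φ, kF φ) = e := by
  simp only [theta, Finset.mem_image, Finset.mem_filter]
  constructor
  · rintro ⟨φ, ⟨h1, h2⟩, h3⟩; exact ⟨φ, h1, h2, h3⟩
  · rintro ⟨φ, h1, h2, h3⟩; exact ⟨φ, ⟨h1, h2⟩, h3⟩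

lemma theta_card (hd : 1 ≤ d) (hpure : ∀ φ ∈ Δ, φ.card = d + 1) {S} (hS : S ⊆ Δ)
    (σ : Finset (Fin (n+1))) :
    (theta S σ).card = (S.filter (fun φ => botF φ = σ)).card := by
  refine Finset.card_image_of_injOn ?_
  intro φ1 h1 φ2 h2 he
  rw [Finset.mem_coe, Finset.mem_filter] at h1 h2
  exact facet_inj hd hpure (hS h1.1) (hS h2.1) (h1.2.trans h2.2.symm) he

lemma sum_theta_card (hd : 1 ≤ d) (hpure : ∀ φ ∈ Δ, φ.card = d + 1) {S} (hS : S ⊆ Δ) :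
    ∑ σ ∈ effectivePeaks d Δ, (theta S σ).card = S.card := by
  rw [Finset.sum_congr rfl (fun σ _ => theta_card hd hpure hS σ)]
  exact (Finset.card_eq_sum_card_fiberwise (fun φ hφ => botF_mem_peaks hd hpure (hS hφ))).symm

lemma theta_good (hd : 1 ≤ d) (hpure : ∀ φ ∈ Δ, φ.card = d + 1) {S}
    (hS : S ∈ cageFreeSubsets Δ) (σ : Finset (Fin (n+1))) :
    GoodF ((theta S σ : Finset (Sym2 (Fin (n+1)))) : Set (Sym2 (Fin (n+1)))) := by
  obtain ⟨hSΔ, hcage⟩ := Finset.mem_filter.1 hS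
  rw [Finset.mem_powerset] at hSΔ
  intro k j1 j2 h1 h2 e1 e2
  rw [Finset.mem_coe, mem_theta] at e1 e2
  obtain ⟨φ1, hφ1S, hb1, he1⟩ := e1
  obtain ⟨φ2, hφ2S, hb2, he2⟩ := e2
  have hΔ1 := hSΔ hφ1S
  have hΔ2 := hSΔ hφ2S
  obtain ⟨-, hjk1, -⟩ := decomp_exists (facet_two_le hd hpure hΔ1)
  obtain ⟨-, hjk2, -⟩ := decomp_exists (facet_two_le hd hpure hΔ2)
  obtain ⟨hja, hka⟩ := sym2_eq hjk1 h1 he1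
  obtain ⟨hjb, hkb⟩ := sym2_eq hjk2 h2 he2
  have hm1 : φ1 ∈ S ∩ Phi Δ σ k :=
    Finset.mem_inter.2 ⟨hφ1S, (mem_Phi_iff hd hpure).2 ⟨hΔ1, hb1, hka⟩⟩
  have hm2 : φ2 ∈ S ∩ Phi Δ σ k :=
    Finset.mem_inter.2 ⟨hφ2S, (mem_Phi_iff hd hpure).2 ⟨hΔ2, hb2, hkb⟩⟩
  have : φ1 = φ2 := Finset.card_le_one.1 (hcage σ k) _ hm1 _ hm2
  rw [← hja, ← hjb, this]

lemma theta_isf (hd : 1 ≤ d) (hpure : ∀ φ ∈ Δ, φ.card = d + 1) {S}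
    (hS : S ∈ cageFreeSubsets Δ) (σ : Finset (Fin (n+1))) :
    IsISF (upperLink Δ σ) (theta S σ) := by
  obtain ⟨hSΔ, hcage⟩ := Finset.mem_filter.1 hS
  rw [Finset.mem_powerset] at hSΔ
  constructor
  · intro e he
    rw [Finset.mem_coe, mem_theta] at he
    obtain ⟨φ, hφS, hb, he⟩ := he
    have hΔ := hSΔ hφS
    obtain ⟨hlt, hjk, heq⟩ := decomp_exists (facet_two_le hd hpure hΔ)
    rw [← he, SimpleGraph.mem_edgeSet]
    exact upperLink_adj_of (hb ▸ hlt) (fun x hx => ((hb ▸ hlt) x hx).trans hjk) hjk.ne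
      (by rw [← hb]; exact heq ▸ hΔ)
  · exact isIncreasingForest_iff_good.2 (theta_good hd hpure hS σ)

end Main

section Main2
variable {n d : ℕ} {Δ : Finset (Finset (Fin (n+1)))}

noncomputable def etop {n : ℕ} (e : Sym2 (Fin (n+1))) : Fin (n+1) :=
  Sym2.lift ⟨fun a b => a ⊔ b, fun a b => sup_comm a b⟩ e

lemma etop_spec {e : Sym2 (Fin (n+1))} (h : ¬ e.IsDiag) :
    ∃ j, j < etop e ∧ e = s(j, etop e) := by
  induction e using Sym2.ind with
  | _ a b =>
    rw [Sym2.mk_isDiag_iff] at h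
    have hab : etop s(a, b) = a ⊔ b := by rw [etop, Sym2.lift_mk]
    rcases lt_or_gt_of_ne (h : a ≠ b) with hlt | hlt
    · refine ⟨a, ?_, ?_⟩
      · rw [hab, sup_eq_right.2 hlt.le]; exact hlt
      · rw [hab, sup_eq_right.2 hlt.le]
    · refine ⟨b, ?_, ?_⟩
      · rw [hab, sup_eq_left.2 hlt.le]; exact hlt
      · rw [hab, sup_eq_left.2 hlt.le]; exact Sym2.eq_swap.symm

lemma card_le_of_good {F : Finset (Sym2 (Fin (n+1)))}
    (hgood : GoodF (F : Set (Sym2 (Fin (n+1))))) (hdiag : ∀ e ∈ F, ¬e.IsDiag) :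
    F.card ≤ n + 1 := by
  have hle : F.card ≤ (Finset.univ : Finset (Fin (n+1))).card := by
    refine Finset.card_le_card_of_injOn etop (fun _ _ => Finset.mem_univ _) ?_
    intro e1 h1 e2 h2 heq
    rw [Finset.mem_coe] at h1 h2
    obtain ⟨j1, hj1, he1⟩ := etop_spec (hdiag _ h1)
    obtain ⟨j2, hj2, he2⟩ := etop_spec (hdiag _ h2)
    have hj2' : j2 < etop e1 := heq ▸ hj2
    have m1 : s(j1, etop e1) ∈ (F : Set (Sym2 (Fin (n+1)))) := he1 ▸ (Finset.mem_coe.2 h1)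
    have m2 : s(j2, etop e1) ∈ (F : Set (Sym2 (Fin (n+1)))) := by
      rw [heq]; exact he2 ▸ (Finset.mem_coe.2 h2)
    have hj := hgood (etop e1) j1 j2 hj1 hj2' m1 m2
    rw [he1, he2, ← heq, hj]
  simpa using hle

lemma isf_card_le {G : SimpleGraph (Fin (n+1))} {F : Finset (Sym2 (Fin (n+1)))}
    (h : IsISF G F) : F.card ≤ n + 1 :=
  card_le_of_good (isIncreasingForest_iff_good.1 h.2)
    (fun e he => G.not_isDiag_of_mem_edgeSet (h.1 (Finset.mem_coe.2 he)))

lemma mem_psi {p : (σ : Finset (Fin (n+1))) → σ ∈ effectivePeaks d Δ → Finset (Sym2 (Fin (n+1)))}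
    {φ : Finset (Fin (n+1))} :
    φ ∈ psi d Δ p ↔ φ ∈ Δ ∧
      ∃ h : botF φ ∈ effectivePeaks d Δ, s(jF φ, kF φ) ∈ p (botF φ) h := by
  rw [psi, Finset.mem_filter]

lemma pi_congr' {P : Finset (Finset (Fin (n+1)))}
    (p : (σ : Finset (Fin (n+1))) → σ ∈ P → Finset (Sym2 (Fin (n+1))))
    {σ1 σ2 : Finset (Fin (n+1))}
    (h : σ1 = σ2) (h1 : σ1 ∈ P) (h2 : σ2 ∈ P) : p σ1 h1 = p σ2 h2 := by
  subst h; rfl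

lemma psi_mem_cageFree (hd : 1 ≤ d) (hpure : ∀ φ ∈ Δ, φ.card = d + 1)
    {p : (σ : Finset (Fin (n+1))) → σ ∈ effectivePeaks d Δ → Finset (Sym2 (Fin (n+1)))}
    (hp : p ∈ (effectivePeaks d Δ).pi (fun σ => ISFset (upperLink Δ σ))) :
    psi d Δ p ∈ cageFreeSubsets Δ := by
  rw [cageFreeSubsets, Finset.mem_filter, Finset.mem_powerset]
  refine ⟨Finset.filter_subset _ _, ?_⟩
  intro σ k
  rw [Finset.card_le_one]
  intro φ1 hm1 φ2 hm2
  rw [Finset.mem_inter] at hm1 hm2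
  obtain ⟨hΔ1, hb1, hk1⟩ := (mem_Phi_iff hd hpure).1 hm1.2
  obtain ⟨hΔ2, hb2, hk2⟩ := (mem_Phi_iff hd hpure).1 hm2.2
  obtain ⟨-, h1, he1⟩ := mem_psi.1 hm1.1
  obtain ⟨-, h2, he2⟩ := mem_psi.1 hm2.1
  have hb12 : botF φ2 = botF φ1 := hb2.trans hb1.symm
  have he2' : s(jF φ2, kF φ2) ∈ p (botF φ1) h1 := by
    rw [← pi_congr' p hb12 h2 h1]; exact he2
  have hisf : IsISF (upperLink Δ (botF φ1)) (p (botF φ1) h1) :=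
    (Finset.mem_filter.1 (Finset.mem_pi.1 hp (botF φ1) h1)).2
  have hgood : GoodF ((p (botF φ1) h1 : Finset (Sym2 (Fin (n+1)))) : Set (Sym2 (Fin (n+1)))) :=
    isIncreasingForest_iff_good.1 hisf.2
  obtain ⟨-, hjk1, -⟩ := decomp_exists (facet_two_le hd hpure hΔ1)
  obtain ⟨-, hjk2, -⟩ := decomp_exists (facet_two_le hd hpure hΔ2)
  have hkk : kF φ2 = kF φ1 := hk2.trans hk1.symm
  have hj : jF φ1 = jF φ2 := by
    refine hgood (kF φ1) (jF φ1) (jF φ2) hjk1 (hkk ▸ hjk2) (Finset.mem_coe.2 he1) ?_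
    have := Finset.mem_coe.2 he2'
    rwa [hkk] at this
  exact facet_inj hd hpure hΔ1 hΔ2 hb12.symm (by rw [hj, hkk])

lemma left_inv_cage (hd : 1 ≤ d) (hpure : ∀ φ ∈ Δ, φ.card = d + 1)
    {S : Finset (Finset (Fin (n+1)))} (hS : S ∈ cageFreeSubsets Δ) :
    psi d Δ (fun σ _ => theta S σ) = S := by
  obtain ⟨hSΔ', -⟩ := Finset.mem_filter.1 hS
  rw [Finset.mem_powerset] at hSΔ'
  ext φ
  rw [mem_psi]
  constructor
  · rintro ⟨hφΔ, h, he⟩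
    rw [mem_theta] at he
    obtain ⟨φ', hφ'S, hb, he⟩ := he
    exact (facet_inj hd hpure (hSΔ' hφ'S) hφΔ hb he) ▸ hφ'S
  · intro hφS
    exact ⟨hSΔ' hφS, botF_mem_peaks hd hpure (hSΔ' hφS), mem_theta.2 ⟨φ, hφS, rfl, rfl⟩⟩

lemma edge_cases {σ : Finset (Fin (n+1))} {e : Sym2 (Fin (n+1))}
    (hedge : e ∈ (upperLink Δ σ).edgeSet) :
    ∃ i j : Fin (n+1), i < j ∧ (∀ x ∈ σ, x < i) ∧ (∀ x ∈ σ, x < j) ∧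
      insert i (insert j σ) ∈ Δ ∧ e = s(i, j) := by
  induction e using Sym2.ind with
  | _ a b =>
    rw [SimpleGraph.mem_edgeSet, upperLink, SimpleGraph.fromRel_adj] at hedge
    obtain ⟨hab, hrel⟩ := hedge
    have key : (∀ x ∈ σ, x < a) ∧ (∀ x ∈ σ, x < b) ∧ insert a (insert b σ) ∈ Δ := by
      rcases hrel with h | h
      · exact h
      · exact ⟨h.2.1, h.1, by rw [Finset.insert_comm]; exact h.2.2⟩
    rcases hab.lt_or_gt with hlt | hlt
    · exact ⟨a, b, hlt, key.1, key.2.1, key.2.2, rfl⟩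
    · exact ⟨b, a, hlt, key.2.1, key.1, by rw [Finset.insert_comm]; exact key.2.2, Sym2.eq_swap⟩

lemma right_inv_cage (hd : 1 ≤ d) (hpure : ∀ φ ∈ Δ, φ.card = d + 1)
    {p : (σ : Finset (Fin (n+1))) → σ ∈ effectivePeaks d Δ → Finset (Sym2 (Fin (n+1)))}
    (hp : p ∈ (effectivePeaks d Δ).pi (fun σ => ISFset (upperLink Δ σ)))
    {σ : Finset (Fin (n+1))} (h : σ ∈ effectivePeaks d Δ) :
    theta (psi d Δ p) σ = p σ h := by
  ext e
  rw [mem_theta]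
  constructor
  · rintro ⟨φ, hφ, hb, he⟩
    obtain ⟨hφΔ, h', he'⟩ := mem_psi.1 hφ
    rw [← he]
    rw [← pi_congr' p hb h' h]
    exact he'
  · intro he
    have hF : IsISF (upperLink Δ σ) (p σ h) :=
      (Finset.mem_filter.1 (Finset.mem_pi.1 hp σ h)).2
    have hedge : e ∈ (upperLink Δ σ).edgeSet := hF.1 (Finset.mem_coe.2 he)
    obtain ⟨i, j, hij, hi, hj, hins, rfl⟩ := edge_cases hedge
    have hdec := decomp_eq hi hij (rfl : insert i (insert j σ) = insert i (insert j σ))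
    refine ⟨insert i (insert j σ), ?_, hdec.2.2.1, by rw [hdec.1, hdec.2.1]⟩
    rw [mem_psi]
    refine ⟨hins, hdec.2.2.1.symm ▸ h, ?_⟩
    rw [pi_congr' p hdec.2.2.1 _ h, hdec.2.1, hdec.1]
    exact he

end Main2

section Main3
variable {n d : ℕ} {Δ : Finset (Finset (Fin (n+1)))}

lemma weight_eq (hd : 1 ≤ d) (hpure : ∀ φ ∈ Δ, φ.card = d + 1)
    {S : Finset (Finset (Fin (n+1)))} (hS : S ∈ cageFreeSubsets Δ) :
    (X : Polynomial ℤ)^((n+1)*(effectivePeaks d Δ).card - S.card)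
      = ∏ σ ∈ (effectivePeaks d Δ).attach, (X : Polynomial ℤ)^(n+1 - (theta S σ.1).card) := by
  rw [Finset.prod_pow_eq_pow_sum]
  congr 1
  have hSΔ : S ⊆ Δ := Finset.mem_powerset.1 (Finset.mem_filter.1 hS).1
  rw [Finset.sum_attach (effectivePeaks d Δ) (fun σ => n + 1 - (theta S σ).card)]
  have hb : ∑ σ ∈ effectivePeaks d Δ, (n+1 - (theta S σ).card)
      + ∑ σ ∈ effectivePeaks d Δ, (theta S σ).card
      = (n+1) * (effectivePeaks d Δ).card := by
    rw [← Finset.sum_add_distrib, Finset.sum_congr rfl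
      (fun σ hσ => Nat.sub_add_cancel (isf_card_le (theta_isf hd hpure hS σ))),
      Finset.sum_const, smul_eq_mul, mul_comm]
  have hc := sum_theta_card hd hpure hSΔ
  have hT : (n+1) * (effectivePeaks d Δ).card
      = ∑ σ ∈ effectivePeaks d Δ, (n+1 - (theta S σ).card) + S.card := by
    rw [← hc]; exact hb.symm
  exact Nat.sub_eq_of_eq_add hT

lemma card_le_Npairs (hd : 1 ≤ d) (hpure : ∀ φ ∈ Δ, φ.card = d + 1)
    {S : Finset (Finset (Fin (n+1)))} (hS : S ∈ cageFreeSubsets Δ) : S.card ≤ Npairs Δ := by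
  obtain ⟨hSp, hcage⟩ := Finset.mem_filter.1 hS
  rw [Finset.mem_powerset] at hSp
  rw [Npairs]
  refine Finset.card_le_card_of_injOn (fun φ => (botF φ, kF φ)) ?_ ?_
  · intro φ hφ
    exact Finset.mem_filter.2 ⟨Finset.mem_univ _,
      ⟨φ, (mem_Phi_iff hd hpure).2 ⟨hSp hφ, rfl, rfl⟩⟩⟩
  · intro φ1 h1 φ2 h2 heq
    rw [Finset.mem_coe] at h1 h2
    have hb : botF φ1 = botF φ2 := congrArg Prod.fst heq
    have hk : kF φ1 = kF φ2 := congrArg Prod.snd heq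
    refine Finset.card_le_one.1 (hcage (botF φ1) (kF φ1)) _ ?_ _ ?_
    · exact Finset.mem_inter.2 ⟨h1, (mem_Phi_iff hd hpure).2 ⟨hSp h1, rfl, rfl⟩⟩
    · exact Finset.mem_inter.2 ⟨h2, (mem_Phi_iff hd hpure).2 ⟨hSp h2, hb.symm, hk.symm⟩⟩

lemma Npairs_le (hd : 1 ≤ d) (hpure : ∀ φ ∈ Δ, φ.card = d + 1) :
    Npairs Δ ≤ (n+1) * (effectivePeaks d Δ).card := by
  rw [Npairs]
  have hsub : (Finset.univ.filter
        fun q : Finset (Fin (n+1)) × Fin (n+1) => (Phi Δ q.1 q.2).Nonempty)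
      ⊆ (effectivePeaks d Δ) ×ˢ Finset.univ := by
    intro q hq
    obtain ⟨φ, hφ⟩ := (Finset.mem_filter.1 hq).2
    obtain ⟨hφΔ, hb, -⟩ := (mem_Phi_iff hd hpure).1 hφ
    exact Finset.mem_product.2 ⟨hb ▸ botF_mem_peaks hd hpure hφΔ, Finset.mem_univ _⟩
  calc (Finset.univ.filter
        fun q : Finset (Fin (n+1)) × Fin (n+1) => (Phi Δ q.1 q.2).Nonempty).card
      ≤ ((effectivePeaks d Δ) ×ˢ (Finset.univ : Finset (Fin (n+1)))).card :=
        Finset.card_le_card hsub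
    _ = (effectivePeaks d Δ).card * (n+1) := by
        rw [Finset.card_product, Finset.card_univ, Fintype.card_fin]
    _ = (n+1) * (effectivePeaks d Δ).card := Nat.mul_comm _ _

lemma isf_filter_card (G : SimpleGraph (Fin (n+1))) (m : ℕ) :
    ((ISFset G).filter (fun F => F.card = m)).card = isf G m := by
  rw [ISFset, isf, Finset.filter_filter]

lemma sum_ISFset (G : SimpleGraph (Fin (n+1))) :
    ∑ F ∈ ISFset G, (X : Polynomial ℤ)^(n+1 - F.card)
      = ∑ m ∈ Finset.range ((n+1)+1), (isf G m : Polynomial ℤ) * X^((n+1)-m) := by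
  rw [← Finset.sum_fiberwise_of_maps_to (g := fun F => F.card) (t := Finset.range ((n+1)+1))
    (fun F hF => Finset.mem_range.2 (by
      show F.card < n + 1 + 1
      have := isf_card_le (Finset.mem_filter.1 hF).2; omega))]
  refine Finset.sum_congr rfl (fun m hm => ?_)
  have hcongr : ∀ F ∈ (ISFset G).filter (fun F => F.card = m),
      (X : Polynomial ℤ)^(n+1-F.card) = X^(n+1-m) :=
    fun F hF => by rw [(Finset.mem_filter.1 hF).2]
  rw [Finset.sum_congr rfl hcongr, Finset.sum_const, nsmul_eq_mul, isf_filter_card]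

lemma isfTotal_sum (G : SimpleGraph (Fin (n+1))) :
    isfTotal G = ∑ m ∈ Finset.range ((n+1)+1), isf G m := by
  have h0 : isfTotal G = (ISFset G).card := rfl
  rw [h0, Finset.card_eq_sum_card_fiberwise (f := fun F => F.card)
    (t := Finset.range ((n+1)+1)) (fun F hF => Finset.mem_range.2 (by
      show F.card < n + 1 + 1
      have := isf_card_le (Finset.mem_filter.1 hF).2; omega))]
  exact Finset.sum_congr rfl (fun m _ => isf_filter_card G m)

lemma main_sum (hd : 1 ≤ d) (hpure : ∀ φ ∈ Δ, φ.card = d + 1) :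
    ∑ S ∈ cageFreeSubsets Δ, (X : Polynomial ℤ)^((n+1)*(effectivePeaks d Δ).card - S.card)
      = ∏ σ ∈ effectivePeaks d Δ,
          ∑ F ∈ ISFset (upperLink Δ σ), (X : Polynomial ℤ)^(n+1 - F.card) := by
  rw [Finset.prod_sum]
  refine Finset.sum_nbij' (i := fun S => fun σ _ => theta S σ) (j := fun p => psi d Δ p)
    ?_ ?_ ?_ ?_ ?_
  · intro S hS
    exact Finset.mem_pi.2 (fun σ hσ =>
      Finset.mem_filter.2 ⟨Finset.mem_univ _, theta_isf hd hpure hS σ⟩)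
  · intro p hp
    exact psi_mem_cageFree hd hpure hp
  · intro S hS
    exact left_inv_cage hd hpure hS
  · intro p hp
    funext σ h
    exact right_inv_cage hd hpure hp h
  · intro S hS
    exact weight_eq hd hpure hS

end Main3

theorem main_aux {n : ℕ} (d : ℕ) (hd : 1 ≤ d) (Δ : Finset (Finset (Fin (n+1))))
    (hpure : ∀ φ ∈ Δ, φ.card = d + 1) :
    ((X : Polynomial ℤ) ^ ((n+1) * (effectivePeaks d Δ).card - Npairs Δ) *
        ∑ S ∈ cageFreeSubsets Δ, (X : Polynomial ℤ) ^ (Npairs Δ - S.card)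
      = ∏ σ ∈ effectivePeaks d Δ,
          ∑ m ∈ Finset.range ((n+1) + 1),
            (isf (upperLink Δ σ) m : Polynomial ℤ) * X ^ ((n+1) - m)) ∧
    (cageFreeSubsets Δ).card = ∏ σ ∈ effectivePeaks d Δ, isfTotal (upperLink Δ σ) := by
  have hNle : Npairs Δ ≤ (n+1) * (effectivePeaks d Δ).card := Npairs_le hd hpure
  have h1 : (X : Polynomial ℤ) ^ ((n+1) * (effectivePeaks d Δ).card - Npairs Δ) *
        ∑ S ∈ cageFreeSubsets Δ, (X : Polynomial ℤ) ^ (Npairs Δ - S.card)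
      = ∑ S ∈ cageFreeSubsets Δ,
          (X : Polynomial ℤ)^((n+1)*(effectivePeaks d Δ).card - S.card) := by
    rw [Finset.mul_sum]
    refine Finset.sum_congr rfl (fun S hS => ?_)
    rw [← pow_add]
    congr 1
    have := card_le_Npairs hd hpure hS
    omega
  have h2 := main_sum (Δ := Δ) hd hpure
  constructor
  · rw [h1, h2]
    exact Finset.prod_congr rfl (fun σ _ => sum_ISFset _)
  · have hev := congrArg (Polynomial.eval (1 : ℤ)) h2
    rw [Polynomial.eval_finset_sum, Polynomial.eval_prod] at hev
    simp only [Polynomial.eval_pow, Polynomial.eval_X, one_pow,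
      Polynomial.eval_finset_sum, Finset.sum_const, nsmul_eq_mul, mul_one] at hev
    have hfin : ((cageFreeSubsets Δ).card : ℤ)
        = ((∏ σ ∈ effectivePeaks d Δ, isfTotal (upperLink Δ σ) : ℕ) : ℤ) := by
      rw [Nat.cast_prod]
      exact hev
    exact_mod_cast hfin


theorem stmt_9 {n : ℕ} (d : ℕ) (hd : 1 ≤ d) (Δ : Finset (Finset (Fin n)))
    (hpure : ∀ φ ∈ Δ, φ.card = d + 1) :
    ((X : Polynomial ℤ) ^ (n * (effectivePeaks d Δ).card - Npairs Δ) *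
        ∑ S ∈ cageFreeSubsets Δ, (X : Polynomial ℤ) ^ (Npairs Δ - S.card)
      = ∏ σ ∈ effectivePeaks d Δ,
          ∑ m ∈ Finset.range (n + 1),
            (isf (upperLink Δ σ) m : Polynomial ℤ) * X ^ (n - m)) ∧
    (cageFreeSubsets Δ).card = ∏ σ ∈ effectivePeaks d Δ, isfTotal (upperLink Δ σ) := by
  rcases Finset.eq_empty_or_nonempty Δ with rfl | ⟨φ0, hφ0⟩
  · have hpeaks : effectivePeaks d (∅ : Finset (Finset (Fin n))) = ∅ := by
      rw [effectivePeaks]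
      refine Finset.filter_false_of_mem ?_
      rintro σ - ⟨-, ⟨φ, hφ, -⟩, -⟩
      exact absurd hφ (Finset.notMem_empty φ)
    have hN : Npairs (∅ : Finset (Finset (Fin n))) = 0 := by
      rw [Npairs, Finset.card_eq_zero]
      refine Finset.filter_false_of_mem ?_
      rintro q - ⟨φ, hφ⟩
      rw [Phi, Finset.mem_filter] at hφ
      exact absurd hφ.1 (Finset.notMem_empty φ)
    have hcf : cageFreeSubsets (∅ : Finset (Finset (Fin n))) = {∅} := by
      rw [cageFreeSubsets, Finset.powerset_empty]
      refine Finset.filter_true_of_mem ?_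
      intro S hS
      rw [Finset.mem_singleton] at hS
      subst hS
      intro σ k
      simp [IsCageFree]
    rw [hpeaks, hN, hcf]
    constructor
    · simp
    · simp
  · have hc := hpure φ0 hφ0
    have hφ0ne : φ0.Nonempty := Finset.card_pos.1 (by omega)
    obtain ⟨x, -⟩ := hφ0ne
    have hn : 0 < n := lt_of_le_of_lt (Nat.zero_le _) x.isLt
    obtain ⟨m, rfl⟩ : ∃ m, n = m + 1 := ⟨n - 1, by omega⟩
    exact main_aux d hd Δ hpure
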